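/- Let P be the transition matrix of an ergodic Markov chain on a finite state space with stationary distribution π, and suppose that for every probability distribution ζ one has H(ζP | π) ≤ (1−δ)·H(ζ | π) for some δ > 0, where H denotes relative entropy (KL divergence). Then the total variation mixing time of P satisfies T_mix(P) ≤ 1 + δ⁻¹·(log 8 + log log(1/π_*)), where π_* = min_σ π(σ). -/

import Mathlib

open scoped Classical BigOperators

noncomputable def ent {Ω : Type*} [Fintype Ω] (π f : Ω → ℝ) : ℝ :=
  (∑ x, π x * f x * Real.log (f x)) - (∑ x, π x * f x) * Real.log (∑ x, π x * f x)

noncomputable def condMean {Ω α : Type*} [Fintype Ω] (ν : Ω → ℝ) (g : Ω → α)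
    (f : Ω → ℝ) (x : Ω) : ℝ :=
  (∑ y, if g y = g x then ν y * f y else 0) / (∑ y, if g y = g x then ν y else 0)

noncomputable def avgCondEnt {Ω α : Type*} [Fintype Ω] (ν : Ω → ℝ) (g : Ω → α)
    (f : Ω → ℝ) : ℝ :=
  ∑ x, ν x * f x * (Real.log (f x) - Real.log (condMean ν g f x))

noncomputable def matMulVec {Ω : Type*} [Fintype Ω] (P : Ω → Ω → ℝ) (f : Ω → ℝ) (x : Ω) : ℝ :=
  ∑ y, P x y * f y

noncomputable def dirForm {Ω : Type*} [Fintype Ω] (π : Ω → ℝ) (P : Ω → Ω → ℝ)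
    (f g : Ω → ℝ) : ℝ :=
  ∑ x, π x * f x * (g x - matMulVec P g x)

noncomputable def stepDist {Ω : Type*} [Fintype Ω] (P : Ω → Ω → ℝ) (ζ : Ω → ℝ) (y : Ω) : ℝ :=
  ∑ x, ζ x * P x y

noncomputable def adjointMat {Ω : Type*} [Fintype Ω] (π : Ω → ℝ) (P : Ω → Ω → ℝ)
    (x y : Ω) : ℝ :=
  π y * P y x / π x

noncomputable def matComp {Ω : Type*} [Fintype Ω] (P Q : Ω → Ω → ℝ) (x y : Ω) : ℝ :=
  ∑ z, P x z * Q z y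

noncomputable def relEnt {Ω : Type*} [Fintype Ω] (π ζ : Ω → ℝ) : ℝ :=
  ∑ x, ζ x * Real.log (ζ x / π x)

noncomputable def tvDist {Ω : Type*} [Fintype Ω] (μ ν : Ω → ℝ) : ℝ :=
  (1 / 2) * ∑ x, |μ x - ν x|

/-- If the chain contracts relative entropy at rate `δ` in each step, then its
total-variation mixing time is at most `1 + δ⁻¹ (log 8 + log log (1/π_*))`. -/

noncomputable def Fphi (r : ℝ) : ℝ := r * Real.log r - r + 1 - 3*(r-1)^2/(2*(r+2))
noncomputable def Gphi (r : ℝ) : ℝ := Real.log r - 3*(r-1)*(r+5)/(2*(r+2)^2)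

lemma hasDerivAt_Fphi {r : ℝ} (hr : 0 < r) : HasDerivAt Fphi (Gphi r) r := by
  have h2 : (2:ℝ)*(r+2) ≠ 0 := by nlinarith
  have h1 : HasDerivAt (fun x : ℝ => x * Real.log x) (Real.log r + 1) r :=
    Real.hasDerivAt_mul_log hr.ne'
  have h3 : HasDerivAt (fun x : ℝ => 3*(x-1)^2) (3*(2*(r-1))) r := by
    have := (((hasDerivAt_id r).sub_const 1).pow 2).const_mul (3:ℝ)
    simpa using this
  have h4 : HasDerivAt (fun x : ℝ => 2*(x+2)) 2 r := by
    simpa using ((hasDerivAt_id r).add_const 2).const_mul (2:ℝ)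
  have h5 := h3.div h4 h2
  have h6 := (((h1.sub (hasDerivAt_id r)).add_const 1).sub h5)
  refine h6.congr_deriv ?_
  unfold Gphi
  field_simp
  ring

lemma hasDerivAt_Gphi {r : ℝ} (hr : 0 < r) : HasDerivAt Gphi (1/r - 27/(r+2)^3) r := by
  have h2 : (2:ℝ)*(r+2)^2 ≠ 0 := by nlinarith
  have h1 : HasDerivAt Real.log (1/r) r := by simpa [one_div] using Real.hasDerivAt_log hr.ne'
  have h3 : HasDerivAt (fun x : ℝ => 3*(x-1)*(x+5)) (3*(r+5) + 3*(r-1)) r := by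
    have a : HasDerivAt (fun x : ℝ => 3*(x-1)) 3 r := by
      simpa using ((hasDerivAt_id r).sub_const 1).const_mul (3:ℝ)
    have b : HasDerivAt (fun x : ℝ => x+5) 1 r := (hasDerivAt_id r).add_const 5
    exact (a.mul b).congr_deriv (by ring)
  have h4 : HasDerivAt (fun x : ℝ => 2*(x+2)^2) (2*(2*(r+2))) r := by
    have := (((hasDerivAt_id r).add_const 2).pow 2).const_mul (2:ℝ)
    simpa using this
  have h5 := h3.div h4 h2
  have h6 := h1.sub h5
  refine h6.congr_deriv ?_
  have hr2 : r + 2 ≠ 0 := by nlinarith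
  field_simp
  ring

lemma Gphi_one : Gphi 1 = 0 := by simp [Gphi]

lemma Gphi_mono : MonotoneOn Gphi (Set.Ioi (0:ℝ)) := by
  have hc : ContinuousOn Gphi (Set.Ioi (0:ℝ)) := fun x hx =>
    (hasDerivAt_Gphi hx).continuousAt.continuousWithinAt
  have hd : ∀ x ∈ interior (Set.Ioi (0:ℝ)), 0 ≤ deriv Gphi x := by
    rw [interior_Ioi]
    intro x hx
    rw [(hasDerivAt_Gphi hx).deriv]
    have hx0 : 0 < x := Set.mem_Ioi.mp hx
    rw [sub_nonneg, div_le_div_iff₀ (by positivity) hx0]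
    nlinarith [sq_nonneg (x-1), hx0.le]
  exact monotoneOn_of_deriv_nonneg (convex_Ioi 0) hc
    (fun x hx => ((hasDerivAt_Gphi (by rwa [interior_Ioi] at hx)).differentiableAt).differentiableWithinAt)
    hd

lemma Fphi_nonneg {r : ℝ} (hr : 0 ≤ r) : 0 ≤ Fphi r := by
  have hF1 : Fphi 1 = 0 := by norm_num [Fphi]
  rcases le_or_gt r 1 with h | h
  · have hc : ContinuousOn Fphi (Set.Icc (0:ℝ) 1) := by
      unfold Fphi
      apply ContinuousOn.sub
      · exact ((Real.continuous_mul_log.sub continuous_id').add continuous_const).continuousOn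
      · exact ContinuousOn.div (by fun_prop) (by fun_prop) (fun x hx => by nlinarith [hx.1])
    have hanti : AntitoneOn Fphi (Set.Icc (0:ℝ) 1) := by
      apply antitoneOn_of_deriv_nonpos (convex_Icc 0 1) hc
      · intro x hx
        rw [interior_Icc] at hx
        exact (hasDerivAt_Fphi hx.1).differentiableAt.differentiableWithinAt
      · intro x hx
        rw [interior_Icc] at hx
        rw [(hasDerivAt_Fphi hx.1).deriv]
        have := Gphi_mono (Set.mem_Ioi.mpr hx.1) (Set.mem_Ioi.mpr one_pos) hx.2.le
        rw [Gphi_one] at this; exact this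
    have := hanti (Set.mem_Icc.mpr ⟨hr, h⟩) (Set.mem_Icc.mpr ⟨zero_le_one, le_refl 1⟩) h
    rw [hF1] at this; exact this
  · have hmono : MonotoneOn Fphi (Set.Ici (1:ℝ)) := by
      apply monotoneOn_of_deriv_nonneg (convex_Ici 1)
      · exact fun x hx => (hasDerivAt_Fphi (lt_of_lt_of_le one_pos hx)).continuousAt.continuousWithinAt
      · intro x hx
        rw [interior_Ici] at hx
        exact (hasDerivAt_Fphi (lt_trans one_pos hx)).differentiableAt.differentiableWithinAt
      · intro x hx
        rw [interior_Ici] at hx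
        rw [(hasDerivAt_Fphi (lt_trans one_pos hx)).deriv]
        have := Gphi_mono (Set.mem_Ioi.mpr one_pos) (Set.mem_Ioi.mpr (lt_trans one_pos hx)) hx.le
        rw [Gphi_one] at this; exact this
    have := hmono (Set.mem_Ici.mpr (le_refl 1)) (Set.mem_Ici.mpr h.le) h.le
    rw [hF1] at this; exact this

lemma key_ineq {r : ℝ} (hr : 0 ≤ r) :
    3*(r-1)^2/(2*(r+2)) ≤ r * Real.log r - r + 1 := by
  have := Fphi_nonneg hr
  unfold Fphi at this; linarith

lemma aux1 (p s : ℝ) (hs : s + 2 ≠ 0) :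
    2*(p*(3*(s-1)^2/(2*(s+2)))) = p*(3*(s-1)^2/(s+2)) := by
  field_simp

lemma aux2 (p s : ℝ) (hs : s + 2 ≠ 0) :
    p * (s + 2)/3 * (p * (3*(s-1)^2/(s+2))) = (p*(s-1))^2 := by
  field_simp

lemma pinsker {Ω : Type*} [Fintype Ω] (π ζ : Ω → ℝ) (hπ0 : ∀ x, 0 < π x)
    (hπ1 : ∑ x, π x = 1) (hζ0 : ∀ x, 0 ≤ ζ x) (hζ1 : ∑ x, ζ x = 1) :
    (∑ x, |ζ x - π x|)^2 ≤ 2 * relEnt π ζ := by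
  set r : Ω → ℝ := fun x => ζ x / π x with hrdef
  have hr0 : ∀ x, 0 ≤ r x := fun x => div_nonneg (hζ0 x) (hπ0 x).le
  have hr2 : ∀ x, 0 < r x + 2 := fun x => by have := hr0 x; linarith
  have hπr : ∀ x, π x * r x = ζ x := fun x => by
    simp only [hrdef]; field_simp [(hπ0 x).ne']
  have hlog : ∀ x, π x * (r x * Real.log (r x)) = ζ x * Real.log (ζ x / π x) := by
    intro x
    rw [← mul_assoc, hπr]
  have key : ∀ x, π x * (3*(r x - 1)^2/(r x + 2)) ≤
      2*(ζ x * Real.log (ζ x / π x) - ζ x + π x) := by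
    intro x
    have h1 := key_ineq (hr0 x)
    have h2 : π x * (3*(r x - 1)^2/(2*(r x + 2))) ≤ π x * (r x * Real.log (r x) - r x + 1) :=
      mul_le_mul_of_nonneg_left h1 (hπ0 x).le
    have e1 := aux1 (π x) (r x) (hr2 x).ne'
    have e2 : π x * (r x * Real.log (r x) - r x + 1) =
        ζ x * Real.log (ζ x / π x) - ζ x + π x := by
      rw [mul_add, mul_sub, mul_one, hlog, hπr]
    nlinarith [h2]
  set f : Ω → ℝ := fun x => Real.sqrt (π x * (r x + 2) / 3) with hf
  set g : Ω → ℝ := fun x => Real.sqrt (π x * (3*(r x - 1)^2/(r x + 2))) with hg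
  have hgarg : ∀ x, 0 ≤ π x * (3*(r x - 1)^2/(r x + 2)) := fun x =>
    mul_nonneg (hπ0 x).le (div_nonneg (by positivity) (hr2 x).le)
  have hfg : ∀ x, f x * g x = |ζ x - π x| := by
    intro x
    rw [hf, hg, ← Real.sqrt_mul
      (div_nonneg (mul_nonneg (hπ0 x).le (hr2 x).le) (by norm_num))]
    rw [aux2 (π x) (r x) (hr2 x).ne', Real.sqrt_sq_eq_abs]
    congr 1
    rw [mul_sub, hπr, mul_one]
  have hf2 : ∑ x, f x ^ 2 = 1 := by
    have e : ∀ x, f x ^ 2 = (ζ x + 2 * π x)/3 := by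
      intro x
      rw [hf, Real.sq_sqrt (div_nonneg (mul_nonneg (hπ0 x).le (hr2 x).le) (by norm_num))]
      rw [mul_add, hπr]
      ring
    calc ∑ x, f x ^ 2 = ∑ x, (ζ x + 2 * π x)/3 := Finset.sum_congr rfl (fun x _ => e x)
      _ = ((∑ x, ζ x) + 2 * ∑ x, π x)/3 := by
          rw [← Finset.sum_div, Finset.sum_add_distrib, ← Finset.mul_sum]
      _ = 1 := by rw [hζ1, hπ1]; norm_num
  have hg2 : ∑ x, g x ^ 2 ≤ 2 * relEnt π ζ := by
    have e : ∀ x, g x ^ 2 = π x * (3*(r x - 1)^2/(r x + 2)) := by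
      intro x
      rw [hg, Real.sq_sqrt (hgarg x)]
    calc ∑ x, g x ^ 2 = ∑ x, π x * (3*(r x - 1)^2/(r x + 2)) :=
          Finset.sum_congr rfl (fun x _ => e x)
      _ ≤ ∑ x, 2*(ζ x * Real.log (ζ x / π x) - ζ x + π x) :=
          Finset.sum_le_sum (fun x _ => key x)
      _ = 2 * relEnt π ζ := by
          rw [relEnt]
          simp only [mul_sub, mul_add]
          rw [Finset.sum_add_distrib, Finset.sum_sub_distrib, ← Finset.mul_sum,
            ← Finset.mul_sum, ← Finset.mul_sum, hζ1, hπ1]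
          ring
  calc (∑ x, |ζ x - π x|)^2 = (∑ x, f x * g x)^2 := by
        rw [Finset.sum_congr rfl (fun x _ => (hfg x).symm)]
      _ ≤ (∑ x, f x ^ 2) * ∑ x, g x ^ 2 := Finset.sum_mul_sq_le_sq_mul_sq _ _ _
      _ = ∑ x, g x ^ 2 := by rw [hf2, one_mul]
      _ ≤ 2 * relEnt π ζ := hg2

lemma relEnt_nonneg {Ω : Type*} [Fintype Ω] (π ζ : Ω → ℝ) (hπ0 : ∀ x, 0 < π x)
    (hπ1 : ∑ x, π x = 1) (hζ0 : ∀ x, 0 ≤ ζ x) (hζ1 : ∑ x, ζ x = 1) :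
    0 ≤ relEnt π ζ := by
  have := pinsker π ζ hπ0 hπ1 hζ0 hζ1
  nlinarith [sq_nonneg (∑ x, |ζ x - π x|)]

theorem stmt0 {Ω : Type*} [Fintype Ω] [Nonempty Ω] [DecidableEq Ω]
    (P : Ω → Ω → ℝ) (π : Ω → ℝ) (δ : ℝ)
    (hP0 : ∀ x y, 0 ≤ P x y) (hP1 : ∀ x, ∑ y, P x y = 1)
    (hπ0 : ∀ x, 0 < π x) (hπ1 : ∑ x, π x = 1)
    (hstat : ∀ y, ∑ x, π x * P x y = π y)
    (hδ : 0 < δ)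
    (hdecay : ∀ ζ : Ω → ℝ, (∀ x, 0 ≤ ζ x) → (∑ x, ζ x = 1) →
      relEnt π (stepDist P ζ) ≤ (1 - δ) * relEnt π ζ) :
    ∀ t : ℕ,
      1 + δ⁻¹ * (Real.log 8 +
          Real.log (Real.log (1 / (Finset.univ.inf' Finset.univ_nonempty π)))) ≤ (t : ℝ) →
      ∀ x0 : Ω,
        tvDist ((stepDist P)^[t] (fun x => if x = x0 then 1 else 0)) π ≤ 1 / 4 := by
  intro t ht x0
  set ζ0 : Ω → ℝ := fun x => if x = x0 then 1 else 0 with hζ0def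
  have hiter : ∀ n, (∀ x, 0 ≤ (stepDist P)^[n] ζ0 x) ∧ (∑ x, (stepDist P)^[n] ζ0 x = 1) := by
    intro n
    induction n with
    | zero =>
      constructor
      · intro x; simp only [Function.iterate_zero_apply, hζ0def]
        split <;> norm_num
      · simp [hζ0def]
    | succ n ih =>
      rw [Function.iterate_succ_apply']
      constructor
      · intro y
        exact Finset.sum_nonneg (fun x _ => mul_nonneg (ih.1 x) (hP0 x y))
      · show ∑ y, ∑ x, ((stepDist P)^[n] ζ0) x * P x y = 1
        rw [Finset.sum_comm]
        calc ∑ x, ∑ y, ((stepDist P)^[n] ζ0) x * P x y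
            = ∑ x, ((stepDist P)^[n] ζ0) x * ∑ y, P x y := by
              simp_rw [Finset.mul_sum]
          _ = ∑ x, ((stepDist P)^[n] ζ0) x := by simp_rw [hP1, mul_one]
          _ = 1 := ih.2
  have hdecayN : ∀ n : ℕ, relEnt π ((stepDist P)^[n] ζ0) ≤
      Real.exp (-δ*n) * relEnt π ζ0 := by
    intro n
    induction n with
    | zero => simp
    | succ n ih =>
      have h1 := hdecay _ (hiter n).1 (hiter n).2
      rw [Function.iterate_succ_apply']
      have hHn0 : 0 ≤ relEnt π ((stepDist P)^[n] ζ0) :=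
        relEnt_nonneg π _ hπ0 hπ1 (hiter n).1 (hiter n).2
      have hH00 : 0 ≤ relEnt π ζ0 := relEnt_nonneg π _ hπ0 hπ1 (hiter 0).1 (hiter 0).2
      have hexp : Real.exp (-δ) * Real.exp (-δ*n) = Real.exp (-δ*(n+1)) := by
        rw [← Real.exp_add]; ring_nf
      rcases le_or_gt 0 (1-δ) with hc | hc
      · calc relEnt π (stepDist P ((stepDist P)^[n] ζ0))
            ≤ (1-δ) * relEnt π ((stepDist P)^[n] ζ0) := h1
          _ ≤ (1-δ) * (Real.exp (-δ*n) * relEnt π ζ0) := mul_le_mul_of_nonneg_left ih hc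
          _ ≤ Real.exp (-δ) * (Real.exp (-δ*n) * relEnt π ζ0) := by
              have h2 : (1-δ) ≤ Real.exp (-δ) := by
                have := Real.add_one_le_exp (-δ); linarith
              exact mul_le_mul_of_nonneg_right h2
                (mul_nonneg (Real.exp_pos _).le hH00)
          _ = Real.exp (-δ*(n+1)) * relEnt π ζ0 := by rw [← mul_assoc, hexp]
          _ = Real.exp (-δ*(n+1:ℕ)) * relEnt π ζ0 := by push_cast; ring_nf
      · have h2 : relEnt π (stepDist P ((stepDist P)^[n] ζ0)) ≤ 0 :=
          le_trans h1 (mul_nonpos_of_nonpos_of_nonneg hc.le hHn0)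
        exact le_trans h2 (mul_nonneg (Real.exp_pos _).le hH00)
  have hH0 : relEnt π ζ0 = - Real.log (π x0) := by
    rw [relEnt]
    rw [Finset.sum_eq_single x0]
    · simp [hζ0def, one_div, Real.log_inv]
    · intro x _ hx
      simp [hζ0def, if_neg hx]
    · intro h; exact absurd (Finset.mem_univ x0) h
  set pmin := Finset.univ.inf' Finset.univ_nonempty π with hpmindef
  have hpmin_pos : 0 < pmin := by
    obtain ⟨b, _, hb⟩ := Finset.exists_mem_eq_inf' Finset.univ_nonempty π
    rw [hpmindef, hb]; exact hπ0 b
  have hpmin_le : ∀ x, pmin ≤ π x := fun x => Finset.inf'_le _ (Finset.mem_univ x)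
  have hπle1 : ∀ x, π x ≤ 1 := by
    intro x
    rw [← hπ1]
    exact Finset.single_le_sum (fun y _ => (hπ0 y).le) (Finset.mem_univ x)
  have hpmin_le1 : pmin ≤ 1 := le_trans (hpmin_le x0) (hπle1 x0)
  set M := Real.log (1/pmin) with hMdef
  have hM : M = -Real.log pmin := by rw [hMdef, one_div, Real.log_inv]
  have hM0 : 0 ≤ M := by
    rw [hM]
    have := Real.log_nonpos hpmin_pos.le hpmin_le1
    linarith
  have hH0le : relEnt π ζ0 ≤ M := by
    rw [hH0, hM, neg_le_neg_iff]
    exact Real.log_le_log hpmin_pos (hpmin_le x0)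
  have hHt : relEnt π ((stepDist P)^[t] ζ0) ≤ Real.exp (-δ*t) * M :=
    le_trans (hdecayN t) (mul_le_mul_of_nonneg_left hH0le (Real.exp_pos _).le)
  have hexpM : Real.exp (-δ*t) * M ≤ 1/8 := by
    rcases eq_or_lt_of_le hM0 with hMz | hMpos
    · rw [← hMz, mul_zero]; norm_num
    · have h8M : (0:ℝ) < 8 * M := by linarith
      have hδt : Real.log (8*M) + δ ≤ δ * t := by
        have h1 : δ * (1 + δ⁻¹ * (Real.log 8 + Real.log M)) ≤ δ * t :=
          mul_le_mul_of_nonneg_left ht hδ.le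
        have h2 : δ * (1 + δ⁻¹ * (Real.log 8 + Real.log M))
            = δ + (Real.log 8 + Real.log M) := by
          field_simp
        have h3 : Real.log (8*M) = Real.log 8 + Real.log M :=
          Real.log_mul (by norm_num) hMpos.ne'
        rw [h3]; linarith
      have h4 : Real.exp (-δ*t) ≤ Real.exp (-(Real.log (8*M))) := by
        apply Real.exp_le_exp.mpr
        linarith
      have h5 : Real.exp (-(Real.log (8*M))) = (8*M)⁻¹ := by
        rw [Real.exp_neg, Real.exp_log h8M]
      calc Real.exp (-δ*t) * M ≤ (8*M)⁻¹ * M := by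
            apply mul_le_mul_of_nonneg_right _ hM0
            rw [← h5]; exact h4
        _ = 1/8 := by field_simp
  have hpin := pinsker π ((stepDist P)^[t] ζ0) hπ0 hπ1 (hiter t).1 (hiter t).2
  have hS0 : 0 ≤ ∑ x, |((stepDist P)^[t] ζ0) x - π x| :=
    Finset.sum_nonneg (fun x _ => abs_nonneg _)
  have hSsq : (∑ x, |((stepDist P)^[t] ζ0) x - π x|)^2 ≤ 1/4 := by
    calc (∑ x, |((stepDist P)^[t] ζ0) x - π x|)^2
        ≤ 2 * relEnt π ((stepDist P)^[t] ζ0) := hpin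
      _ ≤ 2 * (Real.exp (-δ*t) * M) := by linarith
      _ ≤ 1/4 := by linarith
  rw [tvDist]
  nlinarith [hS0, hSsq]
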